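/- Appendix operator identity I: For every smooth function v : ℝ → ℝ, setting (L̃v)(x) = (α·v')'(x) + b(b+1)·α(x)·v(x), one has for all x ∈ ℝ: b·Q(x)·(L̃v)'(x) + (b−1)·Q'(x)·(L̃v)(x) = −b·[ (Q^{−1/b−1}·v)'(x) − (Q^{−1/b−1}·v)'''(x) ] + ((b³−b²)/(2k))·v'(x). -/

import Mathlib

open Real MeasureTheory Filter

noncomputable section

/-- `ν = -(b+1)/2`. -/
def nuP (b : ℝ) : ℝ := -(b + 1) / 2

/-- The lefton momentum profile `Q(x) = (A(1-b)/2) (cosh(νx))^{b/ν}`. -/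
def Qp (b A : ℝ) (x : ℝ) : ℝ :=
  A * (1 - b) / 2 * Real.cosh (nuP b * x) ^ (b / nuP b)

/-- The lefton velocity profile `q(x) = A (cosh(νx))^{-1/ν}`. -/
def qp (b A : ℝ) (x : ℝ) : ℝ := A * Real.cosh (nuP b * x) ^ (-1 / nuP b)

/-- `k = (A(1-b)/2)^{1/b+1}`. -/
def kP (b A : ℝ) : ℝ := (A * (1 - b) / 2) ^ (1 / b + 1)

/-- The weight `α(x) = Q(x)^{-1/b-2}`. -/
def alphaP (b A : ℝ) (x : ℝ) : ℝ := Qp b A x ^ (-1 / b - 2)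

/-- `SQ(x) = (2k(1-b)/b) Q^{-1/b} + (2(b-1)/b) Q`. -/
def SQp (b A : ℝ) (x : ℝ) : ℝ :=
  2 * kP b A * (1 - b) / b * Qp b A x ^ (-1 / b) + 2 * (b - 1) / b * Qp b A x

/-- The Pöschl–Teller potential `H̃₀(x) = 1/4 - (b(1+2b)/4) sech²(νx)`. -/
def Htilde0 (b : ℝ) (x : ℝ) : ℝ :=
  1 / 4 - b * (1 + 2 * b) / 4 * (1 / Real.cosh (nuP b * x)) ^ 2

/-- The Schrödinger operator `(Hg)(x) = (2k/b²)(−g'' + H̃₀ g)`. -/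
def Hop (b A : ℝ) (g : ℝ → ℝ) (x : ℝ) : ℝ :=
  2 * kP b A / b ^ 2 * (-(deriv (deriv g) x) + Htilde0 b x * g x)

/-- The linearized operator `(𝓛f)(x) = k(−((2α/b²) f')' − (2(b+1)/b) α f)`. -/
def Lop (b A : ℝ) (f : ℝ → ℝ) (x : ℝ) : ℝ :=
  kP b A * (-(deriv (fun y => 2 * alphaP b A y / b ^ 2 * deriv f y) x)
    - 2 * (b + 1) / b * alphaP b A x * f x)

/-- The integrand of the conserved functional `F₂`. -/
def F2Integrand (b : ℝ) (f : ℝ → ℝ) (x : ℝ) : ℝ :=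
  f x ^ (-1 / b) * ((deriv f x) ^ 2 / (b ^ 2 * f x ^ 2) + 1)

/-- The squared weighted norm `‖f‖²_{H¹_α} = ∫ (f² + f'²) α`. -/
def HalphaSq (b A : ℝ) (f : ℝ → ℝ) : ℝ :=
  ∫ x, (f x ^ 2 + deriv f x ^ 2) * alphaP b A x

/-- The `𝒵`-norm `‖f‖_𝒵 = ‖f‖_{H¹_α} + sup_x |f(x)|/Q(x)`. -/
def ZNorm (b A : ℝ) (f : ℝ → ℝ) : ℝ :=
  Real.sqrt (HalphaSq b A f) + ⨆ x : ℝ, |f x| / Qp b A x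

/-- `m : ℝ → ℝ → ℝ` (time then space) solves the b-family equation in momentum form,
with velocity `u` satisfying `m = u - u_xx` and `m_t + u m_x + b u_x m = 0`. -/
def IsBFamilySolution (b : ℝ) (m u : ℝ → ℝ → ℝ) : Prop :=
  (∀ t x, m t x = u t x - deriv (deriv (u t)) x) ∧
  ∀ t x, deriv (fun s => m s x) t + u t x * deriv (m t) x + b * deriv (u t) x * m t x = 0

/-- `(v, h)` solves the linearization of the b-family equation around the lefton:
`h - h_xx = v` and `v_t = ∂_x(q h_xx + (b-1) q' h_x - (b+1) q h + q'' h)`. -/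
def IsLinearizedSolution (b A : ℝ) (v h : ℝ → ℝ → ℝ) : Prop :=
  (∀ t x, h t x - deriv (deriv (h t)) x = v t x) ∧
  ∀ t x, deriv (fun s => v s x) t =
    deriv (fun y => qp b A y * deriv (deriv (h t)) y
      + (b - 1) * deriv (qp b A) y * deriv (h t) y
      - (b + 1) * qp b A y * h t y + deriv (deriv (qp b A)) y * h t y) x

/-- The quadratic form `(𝓛η, η) = (2k/b²)∫ η'² α − (2k(b+1)/b)∫ η² α`. -/
def quadFormL (b A : ℝ) (η : ℝ → ℝ) : ℝ :=
  2 * kP b A / b ^ 2 * (∫ x, deriv η x ^ 2 * alphaP b A x)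
    - 2 * kP b A * (b + 1) / b * (∫ x, η x ^ 2 * alphaP b A x)

/-- The monotonicity weight `ψ_L(x) = (2/π) arctan(exp(νx/L))` with `L = 3 - b`. -/
def psiL (b : ℝ) (x : ℝ) : ℝ :=
  2 / Real.pi * Real.arctan (Real.exp (nuP b * x / (3 - b)))

/-- tanh-like helper. -/
def Th (b x : ℝ) : ℝ := Real.sinh (nuP b * x) / Real.cosh (nuP b * x)

lemma Th_hasDerivAt (b y : ℝ) :
    HasDerivAt (Th b) (nuP b * (1 - Th b y ^ 2)) y := by
  have hc : Real.cosh (nuP b * y) ≠ 0 := (Real.cosh_pos _).ne'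
  have hid : HasDerivAt (fun z : ℝ => nuP b * z) (nuP b) y := by
    simpa using (hasDerivAt_id y).const_mul (nuP b)
  have hs : HasDerivAt (fun z => Real.sinh (nuP b * z)) (Real.cosh (nuP b * y) * nuP b) y :=
    hid.sinh
  have hcc : HasDerivAt (fun z => Real.cosh (nuP b * z)) (Real.sinh (nuP b * y) * nuP b) y :=
    hid.cosh
  have h := hs.div hcc hc
  have hval : (Real.cosh (nuP b * y) * nuP b * Real.cosh (nuP b * y) -
      Real.sinh (nuP b * y) * (Real.sinh (nuP b * y) * nuP b)) / Real.cosh (nuP b * y) ^ 2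
      = nuP b * (1 - Th b y ^ 2) := by
    have hsq := Real.cosh_sq_sub_sinh_sq (nuP b * y)
    rw [Th]
    field_simp
  rw [hval] at h
  exact h

lemma chDeriv (b : ℝ) (hν : nuP b ≠ 0) (r K : ℝ) (f : ℝ → ℝ) (f' x : ℝ)
    (hf : HasDerivAt f f' x) :
    HasDerivAt (fun y => K * Real.cosh (nuP b * y) ^ (r / nuP b) * f y)
      (K * Real.cosh (nuP b * x) ^ (r / nuP b) * (f' + r * Th b x * f x)) x := by
  have hc : Real.cosh (nuP b * x) ≠ 0 := (Real.cosh_pos _).ne'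
  have hid : HasDerivAt (fun z : ℝ => nuP b * z) (nuP b) x := by
    simpa using (hasDerivAt_id x).const_mul (nuP b)
  have hcc : HasDerivAt (fun z => Real.cosh (nuP b * z)) (Real.sinh (nuP b * x) * nuP b) x :=
    hid.cosh
  have h2 : HasDerivAt (fun y => Real.cosh (nuP b * y) ^ (r / nuP b))
      ((Real.sinh (nuP b * x) * nuP b) * (r / nuP b) *
        Real.cosh (nuP b * x) ^ (r / nuP b - 1)) x :=
    hcc.rpow_const (Or.inl hc)
  have h3 := (h2.const_mul K).mul hf
  have hval : K * ((Real.sinh (nuP b * x) * nuP b) * (r / nuP b) *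
        Real.cosh (nuP b * x) ^ (r / nuP b - 1)) * f x
      + K * Real.cosh (nuP b * x) ^ (r / nuP b) * f'
      = K * Real.cosh (nuP b * x) ^ (r / nuP b) * (f' + r * Th b x * f x) := by
    rw [Real.rpow_sub (Real.cosh_pos _) _ 1, Real.rpow_one, Th]
    field_simp
    ring
  rw [hval] at h3
  exact h3


/-- **Appendix operator identity I**: for smooth `v`, with `L̃v = (α v')' + b(b+1) α v`,
`b Q (L̃v)' + (b−1) Q' (L̃v) = −b[(Q^{−1/b−1} v)' − (Q^{−1/b−1} v)'''] + ((b³−b²)/(2k)) v'`. -/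
theorem appendix_operator_identity_I (b A : ℝ) (hb : b < -1) (hA : 0 < A)
    (v : ℝ → ℝ) (hv : ContDiff ℝ (⊤ : ℕ∞) v) :
    ∀ x : ℝ,
      b * Qp b A x * deriv (fun y => deriv (fun z => alphaP b A z * deriv v z) y
            + b * (b + 1) * alphaP b A y * v y) x
        + (b - 1) * deriv (Qp b A) x * (deriv (fun z => alphaP b A z * deriv v z) x
            + b * (b + 1) * alphaP b A x * v x)
      = -b * (deriv (fun y => Qp b A y ^ (-1 / b - 1) * v y) x
            - deriv (deriv (deriv (fun y => Qp b A y ^ (-1 / b - 1) * v y))) x)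
        + (b ^ 3 - b ^ 2) / (2 * kP b A) * deriv v x := by
  intro x
  have hb0 : b ≠ 0 := by intro h; rw [h] at hb; norm_num at hb
  have hb1 : b + 1 ≠ 0 := by intro h; nlinarith
  have hνpos : 0 < nuP b := by rw [nuP]; linarith
  have hν0 : nuP b ≠ 0 := hνpos.ne'
  have hc : (0:ℝ) < A * (1 - b) / 2 := by nlinarith
  set c : ℝ := A * (1 - b) / 2 with hcdef
  set Ca : ℝ := c ^ (-1 / b - 2) with hCadef
  set Ck : ℝ := c ^ (-1 / b - 1) with hCkdef
  -- smoothness of v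
  have hvd : Differentiable ℝ v := hv.differentiable (by simp)
  have hv1 : ContDiff ℝ (⊤ : ℕ∞) (deriv v) := (contDiff_infty_iff_deriv.mp hv).2
  have hv1d : Differentiable ℝ (deriv v) := hv1.differentiable (by simp)
  have hv2d : Differentiable ℝ (deriv (deriv v)) :=
    ((contDiff_infty_iff_deriv.mp hv1).2).differentiable (by simp)
  have hdv0 : ∀ y, HasDerivAt v (deriv v y) y := fun y => (hvd y).hasDerivAt
  have hdv1 : ∀ y, HasDerivAt (deriv v) (deriv (deriv v) y) y := fun y => (hv1d y).hasDerivAt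
  have hdv2 : ∀ y, HasDerivAt (deriv (deriv v)) (deriv (deriv (deriv v)) y) y :=
    fun y => (hv2d y).hasDerivAt
  -- rewriting alphaP and Qp powers
  have hα : ∀ y, alphaP b A y = Ca * Real.cosh (nuP b * y) ^ ((-1 - 2*b) / nuP b) := by
    intro y
    rw [alphaP, Qp, ← hcdef,
      Real.mul_rpow hc.le (Real.rpow_nonneg (Real.cosh_pos _).le _),
      ← Real.rpow_mul (Real.cosh_pos _).le,
      show b / nuP b * (-1 / b - 2) = (-1 - 2*b) / nuP b by field_simp]
  have hW : ∀ y, Qp b A y ^ (-1 / b - 1) = Ck * Real.cosh (nuP b * y) ^ ((-(b+1)) / nuP b) := by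
    intro y
    rw [Qp, ← hcdef,
      Real.mul_rpow hc.le (Real.rpow_nonneg (Real.cosh_pos _).le _),
      ← Real.rpow_mul (Real.cosh_pos _).le,
      show b / nuP b * (-1 / b - 1) = (-(b+1)) / nuP b by field_simp; ring]
  -- first derivative of α v'
  have key1 : ∀ y, HasDerivAt (fun z => alphaP b A z * deriv v z)
      (Ca * Real.cosh (nuP b * y) ^ ((-1 - 2*b) / nuP b) *
        (deriv (deriv v) y + (-1 - 2*b) * Th b y * deriv v y)) y := by
    intro y
    have hfun : (fun z => alphaP b A z * deriv v z)
        = fun z => Ca * Real.cosh (nuP b * z) ^ ((-1 - 2*b) / nuP b) * deriv v z := by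
      funext z; rw [hα z]
    rw [hfun]
    exact chDeriv b hν0 _ Ca (deriv v) _ y (hdv1 y)
  have keyd1 : deriv (fun z => alphaP b A z * deriv v z)
      = fun y => Ca * Real.cosh (nuP b * y) ^ ((-1 - 2*b) / nuP b) *
        (deriv (deriv v) y + (-1 - 2*b) * Th b y * deriv v y) :=
    funext fun y => (key1 y).deriv
  -- the function L̃v
  have hLfun : (fun y => deriv (fun z => alphaP b A z * deriv v z) y
        + b * (b + 1) * alphaP b A y * v y)
      = fun y => Ca * Real.cosh (nuP b * y) ^ ((-1 - 2*b) / nuP b) *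
        (deriv (deriv v) y + (-1 - 2*b) * (Th b y * deriv v y) + b * (b+1) * v y) := by
    funext y
    simp only [keyd1, hα y]
    ring
  have hg : ∀ y, HasDerivAt
      (fun y => deriv (deriv v) y + (-1 - 2*b) * (Th b y * deriv v y) + b * (b+1) * v y)
      (deriv (deriv (deriv v)) y
        + (-1 - 2*b) * (nuP b * (1 - Th b y ^ 2) * deriv v y + Th b y * deriv (deriv v) y)
        + b * (b+1) * deriv v y) y :=
    fun y => ((hdv2 y).add (((Th_hasDerivAt b y).mul (hdv1 y)).const_mul (-1 - 2*b))).add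
      ((hdv0 y).const_mul (b * (b+1)))
  have keyL : HasDerivAt (fun y => deriv (fun z => alphaP b A z * deriv v z) y
        + b * (b + 1) * alphaP b A y * v y)
      (Ca * Real.cosh (nuP b * x) ^ ((-1 - 2*b) / nuP b) *
        ((deriv (deriv (deriv v)) x
          + (-1 - 2*b) * (nuP b * (1 - Th b x ^ 2) * deriv v x + Th b x * deriv (deriv v) x)
          + b * (b+1) * deriv v x)
         + (-1 - 2*b) * Th b x *
          (deriv (deriv v) x + (-1 - 2*b) * (Th b x * deriv v x) + b * (b+1) * v x))) x := by
    rw [hLfun]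
    exact chDeriv b hν0 (-1 - 2*b) Ca _ _ x (hg x)
  -- derivative of Q
  have hQfun : Qp b A = fun y => c * Real.cosh (nuP b * y) ^ (b / nuP b) * 1 := by
    funext y; rw [Qp, ← hcdef, mul_one]
  have hQ'x : deriv (Qp b A) x
      = c * Real.cosh (nuP b * x) ^ (b / nuP b) * (b * Th b x) := by
    have h := chDeriv b hν0 b c (fun _ => (1:ℝ)) 0 x (hasDerivAt_const x 1)
    rw [← hQfun] at h
    rw [h.deriv]; ring
  have hQpx : Qp b A x = c * Real.cosh (nuP b * x) ^ (b / nuP b) := by rw [Qp, ← hcdef]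
  -- the W = Q^{-1/b-1} v chain
  have w1 : ∀ y, HasDerivAt (fun y => Qp b A y ^ (-1 / b - 1) * v y)
      (Ck * Real.cosh (nuP b * y) ^ ((-(b+1)) / nuP b) *
        (deriv v y + (-(b+1)) * Th b y * v y)) y := by
    intro y
    have hfun : (fun y => Qp b A y ^ (-1 / b - 1) * v y)
        = fun y => Ck * Real.cosh (nuP b * y) ^ ((-(b+1)) / nuP b) * v y := by
      funext z; rw [hW z]
    rw [hfun]
    exact chDeriv b hν0 _ Ck v _ y (hdv0 y)
  have wd1 : deriv (fun y => Qp b A y ^ (-1 / b - 1) * v y)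
      = fun y => Ck * Real.cosh (nuP b * y) ^ ((-(b+1)) / nuP b) *
        (deriv v y + (-(b+1)) * (Th b y * v y)) := by
    funext y; rw [(w1 y).deriv]; ring
  have hg1 : ∀ y, HasDerivAt (fun y => deriv v y + (-(b+1)) * (Th b y * v y))
      (deriv (deriv v) y
        + (-(b+1)) * (nuP b * (1 - Th b y ^ 2) * v y + Th b y * deriv v y)) y :=
    fun y => (hdv1 y).add (((Th_hasDerivAt b y).mul (hdv0 y)).const_mul (-(b+1)))
  have w2 : ∀ y, HasDerivAt (deriv (fun y => Qp b A y ^ (-1 / b - 1) * v y))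
      (Ck * Real.cosh (nuP b * y) ^ ((-(b+1)) / nuP b) *
        ((deriv (deriv v) y
            + (-(b+1)) * (nuP b * (1 - Th b y ^ 2) * v y + Th b y * deriv v y))
          + (-(b+1)) * Th b y * (deriv v y + (-(b+1)) * (Th b y * v y)))) y := by
    intro y
    rw [wd1]
    exact chDeriv b hν0 (-(b+1)) Ck _ _ y (hg1 y)
  have wd2 : deriv (deriv (fun y => Qp b A y ^ (-1 / b - 1) * v y))
      = fun y => Ck * Real.cosh (nuP b * y) ^ ((-(b+1)) / nuP b) *
        (deriv (deriv v) y + (-2*(b+1)) * (Th b y * deriv v y)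
          + (-(b+1) * nuP b) * v y
          + ((b+1) * nuP b + (b+1)^2) * (Th b y ^ 2 * v y)) := by
    funext y; rw [(w2 y).deriv]; ring
  have hg2 : ∀ y, HasDerivAt
      (fun y => deriv (deriv v) y + (-2*(b+1)) * (Th b y * deriv v y)
        + (-(b+1) * nuP b) * v y
        + ((b+1) * nuP b + (b+1)^2) * (Th b y ^ 2 * v y))
      (deriv (deriv (deriv v)) y
        + (-2*(b+1)) * (nuP b * (1 - Th b y ^ 2) * deriv v y + Th b y * deriv (deriv v) y)
        + (-(b+1) * nuP b) * deriv v y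
        + ((b+1) * nuP b + (b+1)^2) *
          ((2:ℕ) * Th b y ^ (2-1) * (nuP b * (1 - Th b y ^ 2)) * v y
            + Th b y ^ 2 * deriv v y)) y := by
    intro y
    exact (((hdv2 y).add (((Th_hasDerivAt b y).mul (hdv1 y)).const_mul (-2*(b+1)))).add
      ((hdv0 y).const_mul (-(b+1) * nuP b))).add
      ((((Th_hasDerivAt b y).pow 2).mul (hdv0 y)).const_mul ((b+1) * nuP b + (b+1)^2))
  have w3 : HasDerivAt (deriv (deriv (fun y => Qp b A y ^ (-1 / b - 1) * v y)))
      (Ck * Real.cosh (nuP b * x) ^ ((-(b+1)) / nuP b) *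
        ((deriv (deriv (deriv v)) x
          + (-2*(b+1)) * (nuP b * (1 - Th b x ^ 2) * deriv v x + Th b x * deriv (deriv v) x)
          + (-(b+1) * nuP b) * deriv v x
          + ((b+1) * nuP b + (b+1)^2) *
            ((2:ℕ) * Th b x ^ (2-1) * (nuP b * (1 - Th b x ^ 2)) * v x
              + Th b x ^ 2 * deriv v x))
         + (-(b+1)) * Th b x *
          (deriv (deriv v) x + (-2*(b+1)) * (Th b x * deriv v x)
            + (-(b+1) * nuP b) * v x
            + ((b+1) * nuP b + (b+1)^2) * (Th b x ^ 2 * v x)))) x := by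
    rw [wd2]
    exact chDeriv b hν0 (-(b+1)) Ck _ _ x (hg2 x)
  -- constant relations
  have hca : c * Ca = Ck := by
    rw [hCadef, hCkdef]
    nth_rewrite 1 [← Real.rpow_one c]
    rw [← Real.rpow_add hc]
    congr 1; ring
  have hmul : Real.cosh (nuP b * x) ^ (b / nuP b)
        * Real.cosh (nuP b * x) ^ ((-1 - 2*b) / nuP b)
      = Real.cosh (nuP b * x) ^ ((-(b+1)) / nuP b) := by
    rw [← Real.rpow_add (Real.cosh_pos _),
      show b / nuP b + (-1 - 2*b) / nuP b = (-(b+1)) / nuP b by ring]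
  have hkP : kP b A = c ^ (1/b + 1) := by rw [kP, ← hcdef]
  have hkP0 : kP b A ≠ 0 := by
    rw [hkP]; exact (Real.rpow_pos_of_pos hc _).ne'
  have hrel : Ck * Real.cosh (nuP b * x) ^ ((-(b+1)) / nuP b) * (1 - Th b x ^ 2)
      = (kP b A)⁻¹ := by
    have hE : (-(b+1)) / nuP b = (2:ℝ) := by
      have hne : (-1:ℝ) + -b ≠ 0 := fun h => hb1 (by linarith)
      rw [nuP]; field_simp
    have hCk1 : Ck * kP b A = 1 := by
      rw [hCkdef, hkP, ← Real.rpow_add hc,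
        show -1/b - 1 + (1/b + 1) = 0 by ring, Real.rpow_zero]
    have hCkinv : Ck = (kP b A)⁻¹ := eq_inv_of_mul_eq_one_left (by linarith [hCk1] )
    rw [hE, hCkinv, Th, show (2:ℝ) = ((2:ℕ):ℝ) by norm_num, Real.rpow_natCast]
    have hch : Real.cosh (nuP b * x) ≠ 0 := (Real.cosh_pos _).ne'
    have hsq := Real.cosh_sq_sub_sinh_sq (nuP b * x)
    have h2 : Real.cosh (nuP b * x) ^ 2
        * (1 - (Real.sinh (nuP b * x) / Real.cosh (nuP b * x)) ^ 2) = 1 := by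
      field_simp
      try linear_combination hsq
    rw [mul_assoc, h2, mul_one]
  -- assemble
  have T1 : b * Qp b A x * deriv (fun y => deriv (fun z => alphaP b A z * deriv v z) y
        + b * (b + 1) * alphaP b A y * v y) x
      = b * (Ck * Real.cosh (nuP b * x) ^ ((-(b+1)) / nuP b)) *
        ((deriv (deriv (deriv v)) x
          + (-1 - 2*b) * (nuP b * (1 - Th b x ^ 2) * deriv v x + Th b x * deriv (deriv v) x)
          + b * (b+1) * deriv v x)
         + (-1 - 2*b) * Th b x *
          (deriv (deriv v) x + (-1 - 2*b) * (Th b x * deriv v x) + b * (b+1) * v x)) := by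
    rw [keyL.deriv, hQpx, ← hca, ← hmul]; ring
  have T2 : (b - 1) * deriv (Qp b A) x * (deriv (fun z => alphaP b A z * deriv v z) x
        + b * (b + 1) * alphaP b A x * v x)
      = (b - 1) * (Ck * Real.cosh (nuP b * x) ^ ((-(b+1)) / nuP b)) *
        (b * Th b x *
          (deriv (deriv v) x + (-1 - 2*b) * Th b x * deriv v x + b * (b+1) * v x)) := by
    rw [hQ'x, (key1 x).deriv, hα x, ← hca, ← hmul]; ring
  rw [T1, T2, (w1 x).deriv, w3.deriv]
  simp only [nuP] at hrel ⊢
  linear_combination ((b^3 - b^2) / 2 * deriv v x) * hrel
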